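/- Let x, y ∈ L and set z := x + y + (1/2)•⁅x,y⁆ + (1/12)•⁅x−y,⁅x,y⁆⁆ − (1/24)•⁅y,⁅x,⁅x,y⁆⁆⁆. Then E(z) = E(x) ∘ E(y) in End_K(L); that is, the composition of the exponentiated adjoint actions of x and of y equals the exponentiated adjoint action of the single element z, whose expansion through the orders shown is exactly the Baker–Campbell–Hausdorff composite Λ^{(1⊕2)} = Λ^{(1)} + Λ^{(2)} + (1/2)(Λ^{(1)},Λ^{(2)}) + (1/12)(Λ^{(1)}−Λ^{(2)},(Λ^{(1)},Λ^{(2)})) − (1/24)(Λ^{(2)},(Λ^{(1)},(Λ^{(1)},Λ^{(2)}))) quoted in Appendix G.1 for the composition of two U(1)_T transformations. -/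

import Mathlib

set_option maxHeartbeats 1000000

/-- The terminating exponential `E(w) := ∑_{k=0}^{4} (1/k!) • ad(w)^k ∈ End_K(L)` of the
adjoint action of `w`; in a Lie algebra where all five-fold nested brackets vanish this is
the full exponential series. -/
noncomputable def expAd (K : Type*) {L : Type*} [Field K] [LieRing L] [LieAlgebra K L]
    (w : L) : Module.End K L :=
  ∑ k ∈ Finset.range 5, (Nat.factorial k : K)⁻¹ • (LieAlgebra.ad K L w) ^ k

/-- **Baker–Campbell–Hausdorff composition of two U(1)_T transformations (Appendix G.1).**
Let `K` be a field of characteristic zero and `L` a Lie algebra over `K` in which every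
five-fold nested bracket vanishes.  For `x, y ∈ L` set
`z := x + y + (1/2)•⁅x,y⁆ + (1/12)•⁅x−y,⁅x,y⁆⁆ − (1/24)•⁅y,⁅x,⁅x,y⁆⁆⁆`.
Then `E(z) = E(x) ∘ E(y)`: the composite of the exponentiated adjoint actions of `x` and `y`
is the exponentiated adjoint action of the single BCH element `z`. -/
theorem expAd_bch {K : Type*} [Field K] [CharZero K] {L : Type*} [LieRing L] [LieAlgebra K L]
    (hnil : ∀ a₁ a₂ a₃ a₄ a₅ : L, ⁅a₁, ⁅a₂, ⁅a₃, ⁅a₄, a₅⁆⁆⁆⁆ = 0) (x y : L) :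
    expAd K (x + y + (1 / 2 : K) • ⁅x, y⁆ + (1 / 12 : K) • ⁅x - y, ⁅x, y⁆⁆
        - (1 / 24 : K) • ⁅y, ⁅x, ⁅x, y⁆⁆⁆)
      = expAd K x * expAd K y := by
  have h4 : ∀ a b c d : L, (LieAlgebra.ad K L a) * (LieAlgebra.ad K L b) * (LieAlgebra.ad K L c) *
      (LieAlgebra.ad K L d) = 0 := by
    intro a b c d; ext v; simpa [LieAlgebra.ad_apply] using hnil a b c d v
  have hlast : (LieAlgebra.ad K L) ⁅y, ⁅x, ⁅x, y⁆⁆⁆ = 0 := by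
    simp only [LieHom.map_lie, Ring.lie_def, mul_sub, sub_mul, ← mul_assoc]
    simp only [h4, zero_mul, mul_zero, sub_zero, zero_sub, neg_zero, sub_self]
  have hC : (LieAlgebra.ad K L) (x + y + (1 / 2 : K) • ⁅x, y⁆ + (1 / 12 : K) • ⁅x - y, ⁅x, y⁆⁆
      - (1 / 24 : K) • ⁅y, ⁅x, ⁅x, y⁆⁆⁆)
      = ((LieAlgebra.ad K L x) + (LieAlgebra.ad K L y)) + (1 / 2 : K) • ((LieAlgebra.ad K L x) * (LieAlgebra.ad K L y) - (LieAlgebra.ad K L y) * (LieAlgebra.ad K L x)) + (1 / 12 : K) • (((LieAlgebra.ad K L x) - (LieAlgebra.ad K L y)) * ((LieAlgebra.ad K L x) * (LieAlgebra.ad K L y) - (LieAlgebra.ad K L y) * (LieAlgebra.ad K L x)) - ((LieAlgebra.ad K L x) * (LieAlgebra.ad K L y) - (LieAlgebra.ad K L y) * (LieAlgebra.ad K L x)) * ((LieAlgebra.ad K L x) - (LieAlgebra.ad K L y))) := by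
    simp only [map_add, map_sub, map_smul, LieHom.map_lie, Ring.lie_def,
      hlast, smul_zero, sub_zero]
  have hC2 : ((LieAlgebra.ad K L) (x + y + (1 / 2 : K) • ⁅x, y⁆ + (1 / 12 : K) • ⁅x - y, ⁅x, y⁆⁆ - (1 / 24 : K) • ⁅y, ⁅x, ⁅x, y⁆⁆⁆)) ^ 2 = ((LieAlgebra.ad K L x) + (LieAlgebra.ad K L y)) * ((LieAlgebra.ad K L x) + (LieAlgebra.ad K L y)) + (1 / 2 : K) • (((LieAlgebra.ad K L x) + (LieAlgebra.ad K L y)) * ((LieAlgebra.ad K L x) * (LieAlgebra.ad K L y) - (LieAlgebra.ad K L y) * (LieAlgebra.ad K L x)) + ((LieAlgebra.ad K L x) * (LieAlgebra.ad K L y) - (LieAlgebra.ad K L y) * (LieAlgebra.ad K L x)) * ((LieAlgebra.ad K L x) + (LieAlgebra.ad K L y))) := by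
    rw [pow_two, hC]
    simp only [mul_add, add_mul, mul_sub, sub_mul, smul_mul_assoc, mul_smul_comm, smul_smul,
      smul_add, smul_sub, ← mul_assoc]
    simp only [h4, zero_mul, mul_zero, smul_zero, add_zero, zero_add, sub_zero, zero_sub,
      neg_zero, sub_self]
    match_scalars <;> ring
  have hC3 : ((LieAlgebra.ad K L) (x + y + (1 / 2 : K) • ⁅x, y⁆ + (1 / 12 : K) • ⁅x - y, ⁅x, y⁆⁆ - (1 / 24 : K) • ⁅y, ⁅x, ⁅x, y⁆⁆⁆)) ^ 3 = ((LieAlgebra.ad K L x) + (LieAlgebra.ad K L y)) * ((LieAlgebra.ad K L x) + (LieAlgebra.ad K L y)) * ((LieAlgebra.ad K L x) + (LieAlgebra.ad K L y)) := by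
    rw [pow_succ, hC2, hC]
    simp only [mul_add, add_mul, mul_sub, sub_mul, smul_mul_assoc, mul_smul_comm, smul_smul,
      smul_add, smul_sub, ← mul_assoc]
    simp only [h4, zero_mul, mul_zero, smul_zero, add_zero, zero_add, sub_zero, zero_sub,
      neg_zero, sub_self]

  have hC4 : ((LieAlgebra.ad K L) (x + y + (1 / 2 : K) • ⁅x, y⁆ + (1 / 12 : K) • ⁅x - y, ⁅x, y⁆⁆ - (1 / 24 : K) • ⁅y, ⁅x, ⁅x, y⁆⁆⁆)) ^ 4 = 0 := by
    rw [pow_succ, hC3, hC]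
    simp only [mul_add, add_mul, mul_sub, sub_mul, smul_mul_assoc, mul_smul_comm, smul_smul,
      smul_add, smul_sub, ← mul_assoc]
    simp only [h4, zero_mul, mul_zero, smul_zero, add_zero, zero_add, sub_zero, zero_sub,
      neg_zero, sub_self]
  unfold expAd
  simp only [Finset.sum_range_succ, Finset.sum_range_zero, zero_add, pow_zero, pow_one]
  rw [hC2, hC3, hC4, hC]
  simp only [pow_succ, pow_zero, pow_one, one_mul]
  simp only [mul_add, add_mul, mul_sub, sub_mul, smul_mul_assoc, mul_smul_comm, smul_smul,
    smul_add, smul_sub, mul_one, one_mul, ← mul_assoc]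
  simp only [h4, zero_mul, mul_zero, smul_zero, add_zero, zero_add, sub_zero, zero_sub,
    neg_zero, sub_self]
  match_scalars <;> norm_num [Nat.factorial]
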